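/- Let G be the group of order p^{2r+1}·2^n described in the context. Then neither (⟨P, b⟩, P) nor (⟨P, ba⟩, P) is a Shoda pair of G, where ⟨P, b⟩ (respectively ⟨P, ba⟩) denotes the subgroup generated by P and b (respectively by P and ba). -/

import Mathlib

open scoped Classical

namespace Paper

variable {G : Type*} [Group G] [Fintype G]

noncomputable instance : Fintype (Subgroup G) :=
  Fintype.ofInjective (fun H : Subgroup G => (H : Set G)) SetLike.coe_injective

/-- `M̂ = (1/|M|) ∑_{m ∈ M} m` in the rational group algebra `ℚ[G]`. -/
noncomputable def hat (M : Subgroup G) : MonoidAlgebra ℚ G :=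
  (Nat.card M : ℚ)⁻¹ • ∑ m : M, MonoidAlgebra.of ℚ G (m : G)

/-- `L` is a normal subgroup of `H` properly containing `K`. -/
def NormalOver (H K L : Subgroup G) : Prop :=
  L ≤ H ∧ K < L ∧ ∀ h ∈ H, ∀ g ∈ L, h⁻¹ * g * h ∈ L

/-- `L` is minimal among the normal subgroups of `H` properly containing `K`. -/
def MinimalOver (H K L : Subgroup G) : Prop :=
  NormalOver H K L ∧ ∀ L' : Subgroup G, NormalOver H K L' → L' ≤ L → L' = L

/-- `ε(H,K) = K̂` if `H = K`, and otherwise `∏_L (K̂ - L̂)`, the product running over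
the normal subgroups `L` of `H` minimal with respect to properly containing `K`
(all such factors commute pairwise, so the product is order-independent). -/
noncomputable def eps (H K : Subgroup G) : MonoidAlgebra ℚ G :=
  if H = K then hat K
  else (({L : Subgroup G | MinimalOver H K L}.toFinset).toList.map
    fun L => hat K - hat L).prod

/-- The subgroup `[H,g] = ⟨g⁻¹h⁻¹gh : h ∈ H⟩`. -/
def commSub (H : Subgroup G) (g : G) : Subgroup G :=
  Subgroup.closure {c : G | ∃ h ∈ H, c = g⁻¹ * h⁻¹ * g * h}

/-- The quotient `H/K` is cyclic (elementwise formulation: some `h ∈ H` is such that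
every `g ∈ H` lies in a coset `h^m K`). -/
def CyclicQuot (H K : Subgroup G) : Prop :=
  ∃ h ∈ H, ∀ g ∈ H, ∃ m : ℤ, (h ^ m)⁻¹ * g ∈ K

/-- `K` is normal in `H` (elementwise formulation). -/
def NormalIn (H K : Subgroup G) : Prop :=
  ∀ h ∈ H, ∀ g ∈ K, h⁻¹ * g * h ∈ K

/-- `(H,K)` is a Shoda pair of `G`. -/
def IsShodaPair (H K : Subgroup G) : Prop :=
  K ≤ H ∧ NormalIn H K ∧ CyclicQuot H K ∧
    ∀ g : G, commSub H g ⊓ H ≤ K → g ∈ H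

/-- `(H,K)` is a strong Shoda pair of `G`: conditions (SS1), (SS2), (SS3).
Maximal abelianness of `H/K` in `N_G(K)/K` is phrased via the Galois correspondence
between subgroups of `N_G(K)/K` and subgroups of `G` lying between `K` and `N_G(K)`. -/
def IsStrongShodaPair (H K : Subgroup G) : Prop :=
  -- (SS1): `H` is a normal subgroup of `N_G(K)`
  (H ≤ Subgroup.normalizer (K : Set G) ∧ ∀ g ∈ Subgroup.normalizer (K : Set G), ∀ h ∈ H, g⁻¹ * h * g ∈ H) ∧
  -- (SS2): `H/K` is cyclic and a maximal abelian subgroup of `N_G(K)/K`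
  (CyclicQuot H K ∧
    (∀ h₁ ∈ H, ∀ h₂ ∈ H, h₁⁻¹ * h₂⁻¹ * h₁ * h₂ ∈ K) ∧
    ∀ C : Subgroup G, K ≤ C → C ≤ Subgroup.normalizer (K : Set G) →
      (∀ c₁ ∈ C, ∀ c₂ ∈ C, c₁⁻¹ * c₂⁻¹ * c₁ * c₂ ∈ K) → H ≤ C → C = H) ∧
  -- (SS3): `ε(H,K)·(g⁻¹ ε(H,K) g) = 0` for `g ∉ N_G(K)`
  (∀ g : G, g ∉ Subgroup.normalizer (K : Set G) →
    eps H K * (MonoidAlgebra.of ℚ G g⁻¹ * eps H K * MonoidAlgebra.of ℚ G g) = 0)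


/-- The data of the group `G = P ⋊ D_{2^n}` of order `p^{2r+1}·2^n`: an odd prime
`p ≡ 1 (mod 4)`, `r ≥ 1`, `n ≥ 3` with `2^{n-1}` the exact power of `2` dividing
`p - 1`, an integer `k` of multiplicative order `2^{n-1}` modulo `p` with inverse `q`
modulo `p`, and generators `x, y₁, …, y_r, z₁, …, z_r, a, b` of `G` subject to the
listed relations (commutator convention `[u,v] = u⁻¹v⁻¹uv`). -/
structure GData (G : Type*) [Group G] [Fintype G] where
  p : ℕ
  r : ℕ
  n : ℕ
  k : ℕ
  q : ℕ
  x : G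
  y : Fin r → G
  z : Fin r → G
  a : G
  b : G
  hp : p.Prime
  hp4 : p % 4 = 1
  hr : 1 ≤ r
  hn : 3 ≤ n
  hdvd : 2 ^ (n - 1) ∣ p - 1
  hndvd : ¬ 2 ^ n ∣ p - 1
  hordk : orderOf ((k : ZMod p)) = 2 ^ (n - 1)
  hkq : ((k : ZMod p)) * (q : ZMod p) = 1
  hcard : Fintype.card G = p ^ (2 * r + 1) * 2 ^ n
  hgen : Subgroup.closure (({x, a, b} : Set G) ∪ Set.range y ∪ Set.range z) = ⊤
  hxp : x ^ p = 1
  hyp : ∀ i, y i ^ p = 1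
  hzp : ∀ i, z i ^ p = 1
  han : a ^ 2 ^ (n - 1) = 1
  hb2 : b ^ 2 = 1
  hxy : ∀ i, x⁻¹ * (y i)⁻¹ * x * y i = 1
  hxz : ∀ i, x⁻¹ * (z i)⁻¹ * x * z i = 1
  hyy : ∀ i j, (y i)⁻¹ * (y j)⁻¹ * y i * y j = 1
  hzz : ∀ i j, (z i)⁻¹ * (z j)⁻¹ * z i * z j = 1
  hyz : ∀ i, (y i)⁻¹ * (z i)⁻¹ * y i * z i = x
  hyz' : ∀ i j, i ≠ j → (y i)⁻¹ * (z j)⁻¹ * y i * z j = 1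
  hax : a⁻¹ * x⁻¹ * a * x = 1
  hay : ∀ i, a⁻¹ * (y i)⁻¹ * a * y i = (y i) ^ (1 - (k : ℤ))
  haz : ∀ i, a⁻¹ * (z i)⁻¹ * a * z i = (z i) ^ (1 - (q : ℤ))
  hbx : b⁻¹ * x⁻¹ * b * x = x ^ 2
  hby : ∀ i, b⁻¹ * (y i)⁻¹ * b * y i = z i * y i
  hbz : ∀ i, b⁻¹ * (z i)⁻¹ * b * z i = y i * z i
  hba : b⁻¹ * a⁻¹ * b * a = a ^ 2

variable {G : Type*} [Group G] [Fintype G]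

/-- The subgroup `P = ⟨x, y₁, …, y_r, z₁, …, z_r⟩` of `G`. -/
def GData.P (d : GData G) : Subgroup G :=
  Subgroup.closure (({d.x} : Set G) ∪ Set.range d.y ∪ Set.range d.z)

end Paper


namespace PaperAux

open Subgroup

variable {G : Type*} [Group G]

lemma mul_comm_of_comm_eq_one {u v : G} (h : u⁻¹ * v⁻¹ * u * v = 1) : u * v = v * u := by
  have h2 : v * u * (u⁻¹ * v⁻¹ * u * v) = v * u := by rw [h, mul_one]
  calc u * v = v * u * (u⁻¹ * v⁻¹ * u * v) := by group
  _ = v * u := h2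

lemma conj_mem_closure {S : Set G} {g : G}
    (h1 : ∀ s ∈ S, g * s * g⁻¹ ∈ Subgroup.closure S) :
    ∀ x ∈ Subgroup.closure S, g * x * g⁻¹ ∈ Subgroup.closure S := by
  intro x hx
  induction hx using Subgroup.closure_induction with
  | mem s hs => exact h1 s hs
  | one => simpa using one_mem _
  | mul u v hu hv pu pv =>
      have : g * (u * v) * g⁻¹ = (g * u * g⁻¹) * (g * v * g⁻¹) := by group
      rw [this]; exact mul_mem pu pv
  | inv u hu pu =>
      have : g * u⁻¹ * g⁻¹ = (g * u * g⁻¹)⁻¹ := by group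
      rw [this]; exact inv_mem pu

lemma mem_normalizer_closure {S : Set G} {g : G}
    (h1 : ∀ s ∈ S, g * s * g⁻¹ ∈ Subgroup.closure S)
    (h2 : ∀ s ∈ S, g⁻¹ * s * g ∈ Subgroup.closure S) :
    g ∈ Subgroup.normalizer ((Subgroup.closure S : Subgroup G) : Set G) := by
  rw [Subgroup.mem_normalizer_iff]
  intro h
  constructor
  · exact fun hh => conj_mem_closure h1 h hh
  · intro hh
    have h2' : ∀ s ∈ S, g⁻¹ * s * (g⁻¹)⁻¹ ∈ Subgroup.closure S := by
      intro s hs; rw [inv_inv]; exact h2 s hs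
    have := conj_mem_closure h2' _ hh
    have e : g⁻¹ * (g * h * g⁻¹) * (g⁻¹)⁻¹ = h := by group
    rwa [e] at this

/-- decomposition of elements of `H ⊔ ⟨c⟩` when `c` normalizes `H` -/
lemma mem_sup_closure_singleton {H : Subgroup G} {c : G} (hc : c ∈ Subgroup.normalizer (H : Set G))
    {g : G} (hg : g ∈ H ⊔ Subgroup.closure {c}) :
    ∃ u ∈ H, ∃ j : ℤ, g = u * c ^ j := by
  have hconj : ∀ (j : ℤ), ∀ v ∈ H, c ^ j * v * c ^ (-j) ∈ H := by
    intro j v hv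
    have hcj : c ^ j ∈ Subgroup.normalizer (H : Set G) := zpow_mem hc j
    rw [Subgroup.mem_normalizer_iff] at hcj
    have := (hcj v).mp hv
    rwa [← zpow_neg] at this
  have hg' : g ∈ Subgroup.closure ((H : Set G) ∪ {c}) := by
    rwa [Subgroup.closure_union, Subgroup.closure_eq]
  clear hg
  induction hg' using Subgroup.closure_induction with
  | mem s hs =>
      rcases hs with hs | hs
      · exact ⟨s, hs, 0, by simp⟩
      · exact ⟨1, one_mem _, 1, by simp [Set.mem_singleton_iff.mp hs]⟩
  | one => exact ⟨1, one_mem _, 0, by simp⟩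
  | mul u v hu hv pu pv =>
      obtain ⟨u1, hu1, i, rfl⟩ := pu
      obtain ⟨v1, hv1, j, rfl⟩ := pv
      refine ⟨u1 * (c ^ i * v1 * c ^ (-i)), mul_mem hu1 (hconj i v1 hv1), i + j, ?_⟩
      group
  | inv u hu pu =>
      obtain ⟨u1, hu1, i, rfl⟩ := pu
      refine ⟨c ^ (-i) * u1⁻¹ * c ^ (-(-i)), hconj (-i) u1⁻¹ (inv_mem hu1), -i, ?_⟩
      group

lemma card_sup_le [Fintype G] {H : Subgroup G} {c : G} (hc : c ∈ Subgroup.normalizer (H : Set G))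
    {t : ℕ} (ht : 0 < t) (hct : c ^ t = 1) :
    Nat.card (H ⊔ Subgroup.closure {c} : Subgroup G) ≤ Nat.card H * t := by
  have hcmem : c ∈ H ⊔ Subgroup.closure {c} :=
    Subgroup.mem_sup_right (Subgroup.subset_closure rfl)
  set f : H × Fin t → (H ⊔ Subgroup.closure {c} : Subgroup G) :=
    fun ui => ⟨(ui.1 : G) * c ^ (ui.2 : ℕ),
      mul_mem (Subgroup.mem_sup_left ui.1.2) (pow_mem hcmem _)⟩ with hf
  have hsurj : Function.Surjective f := by
    rintro ⟨g, hg⟩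
    obtain ⟨u, hu, j, rfl⟩ := mem_sup_closure_singleton hc hg
    have ht' : (t : ℤ) ≠ 0 := by exact_mod_cast ht.ne'
    have hjt : c ^ j = c ^ ((j % (t : ℤ)).toNat) := by
      have e1 : c ^ j = c ^ ((t : ℤ) * (j / (t : ℤ)) + j % (t : ℤ)) := by
        rw [Int.mul_ediv_add_emod]
      have e2 : c ^ ((t : ℤ) * (j / (t : ℤ))) = 1 := by
        rw [zpow_mul, zpow_natCast, hct, one_zpow]
      have e3 : c ^ (j % (t : ℤ)) = c ^ ((j % (t : ℤ)).toNat) := by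
        rw [← zpow_natCast, Int.toNat_of_nonneg (Int.emod_nonneg j ht')]
      rw [e1, zpow_add, e2, one_mul, e3]
    have hlt : (j % (t : ℤ)).toNat < t := by
      have := Int.emod_lt_of_pos j (by exact_mod_cast ht : (0:ℤ) < t)
      omega
    refine ⟨⟨⟨u, hu⟩, ⟨(j % (t : ℤ)).toNat, hlt⟩⟩, ?_⟩
    simp only [hf]
    exact Subtype.ext (by simp [← hjt])
  calc Nat.card (H ⊔ Subgroup.closure {c} : Subgroup G)
      ≤ Nat.card (H × Fin t) := Nat.card_le_card_of_surjective f hsurj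
    _ = Nat.card H * t := by simp [Nat.card_prod]

lemma closure_comm {S : Set G} (hcomm : ∀ s ∈ S, ∀ u ∈ S, s * u = u * s) :
    ∀ g ∈ Subgroup.closure S, ∀ h ∈ Subgroup.closure S, g * h = h * g := by
  have h1 : Subgroup.closure S ≤ Subgroup.centralizer S := by
    rw [Subgroup.closure_le]
    intro s hs
    rw [SetLike.mem_coe, Subgroup.mem_centralizer_iff]
    exact fun u hu => hcomm u hu s hs
  have h2 : Subgroup.closure S ≤ Subgroup.centralizer (Subgroup.closure S : Set G) := by
    rw [Subgroup.closure_le]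
    intro s hs
    rw [SetLike.mem_coe, Subgroup.mem_centralizer_iff]
    intro u hu
    exact (h1 hu s hs).symm
  intro g hg h hh
  exact (h2 hh g hg)

lemma pow_eq_one_closure {S : Set G} {m : ℕ}
    (hcomm : ∀ s ∈ S, ∀ u ∈ S, s * u = u * s)
    (hm : ∀ s ∈ S, s ^ m = 1) : ∀ g ∈ Subgroup.closure S, g ^ m = 1 := by
  intro g hg
  induction hg using Subgroup.closure_induction with
  | mem s hs => exact hm s hs
  | one => simp
  | mul u v hu hv pu pv =>
      rw [Commute.mul_pow (closure_comm hcomm u hu v hv), pu, pv, one_mul]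
  | inv u hu pu => rw [inv_pow, pu, inv_one]

end PaperAux

namespace PaperAux

open Subgroup Paper

/-- decomposition when `c` has order dividing 2 -/
lemma mem_sup_two {G : Type*} [Group G] {H : Subgroup G} {c : G} (hc : c ∈ Subgroup.normalizer (H : Set G))
    (hc2 : c ^ 2 = 1) {g : G} (hg : g ∈ H ⊔ Subgroup.closure {c}) :
    g ∈ H ∨ ∃ u ∈ H, g = u * c := by
  obtain ⟨u, hu, j, rfl⟩ := mem_sup_closure_singleton hc hg
  have hc2' : c ^ (2:ℤ) = 1 := by
    rw [show (2:ℤ) = ((2:ℕ):ℤ) from rfl, zpow_natCast, hc2]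
  rcases Int.even_or_odd j with ⟨m, rfl⟩ | ⟨m, rfl⟩
  · left
    have h1 : c ^ (m + m) = 1 := by
      rw [show m + m = 2*m from by ring, zpow_mul, hc2', one_zpow]
    rw [h1, mul_one]; exact hu
  · right
    refine ⟨u, hu, ?_⟩
    rw [zpow_add, zpow_mul, hc2', one_zpow, one_mul, zpow_one]

variable {G : Type*} [Group G] [Fintype G] (d : Paper.GData G)

/-- `M = P⟨a⟩` -/
def M : Subgroup G := d.P ⊔ Subgroup.closure {d.a}

lemma kq_modeq : ∃ m : ℕ, d.k * d.q = 1 + d.p * m := by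
  have h1 : ((d.k * d.q : ℕ) : ZMod d.p) = ((1 : ℕ) : ZMod d.p) := by
    push_cast
    rw [d.hkq]
  have h2 : 1 ≡ d.k * d.q [MOD d.p] := ((ZMod.natCast_eq_natCast_iff _ _ _).mp h1).symm
  have hkq1 : 1 ≤ d.k * d.q := by
    by_contra h
    have h0 : d.k * d.q = 0 := by omega
    rw [h0] at h2
    have h3 := (Nat.modEq_zero_iff_dvd).mp h2
    have h4 := Nat.le_of_dvd one_pos h3
    have := d.hp.two_le
    omega
  obtain ⟨m, hm⟩ := (Nat.modEq_iff_dvd' hkq1).mp h2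
  exact ⟨m, by omega⟩

lemma comm_ax : d.a * d.x = d.x * d.a := mul_comm_of_comm_eq_one d.hax

lemma conj_a_y (i : Fin d.r) : d.a⁻¹ * d.y i * d.a = d.y i ^ d.k := by
  have h2 : d.a⁻¹ * (d.y i)⁻¹ * d.a = (d.y i) ^ (-(d.k:ℤ)) := by
    calc d.a⁻¹ * (d.y i)⁻¹ * d.a
        = (d.a⁻¹ * (d.y i)⁻¹ * d.a * d.y i) * (d.y i)⁻¹ := by group
      _ = d.y i ^ (1 - (d.k:ℤ)) * (d.y i)⁻¹ := by rw [d.hay i]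
      _ = (d.y i) ^ (-(d.k:ℤ)) := by
          rw [sub_eq_add_neg, zpow_add, zpow_one]; group
  calc d.a⁻¹ * d.y i * d.a = ((d.a⁻¹ * (d.y i)⁻¹ * d.a))⁻¹ := by group
    _ = d.y i ^ d.k := by rw [h2, ← zpow_neg, neg_neg, zpow_natCast]

lemma conj_a_z (i : Fin d.r) : d.a⁻¹ * d.z i * d.a = d.z i ^ d.q := by
  have h2 : d.a⁻¹ * (d.z i)⁻¹ * d.a = (d.z i) ^ (-(d.q:ℤ)) := by
    calc d.a⁻¹ * (d.z i)⁻¹ * d.a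
        = (d.a⁻¹ * (d.z i)⁻¹ * d.a * d.z i) * (d.z i)⁻¹ := by group
      _ = d.z i ^ (1 - (d.q:ℤ)) * (d.z i)⁻¹ := by rw [d.haz i]
      _ = (d.z i) ^ (-(d.q:ℤ)) := by
          rw [sub_eq_add_neg, zpow_add, zpow_one]; group
  calc d.a⁻¹ * d.z i * d.a = ((d.a⁻¹ * (d.z i)⁻¹ * d.a))⁻¹ := by group
    _ = d.z i ^ d.q := by rw [h2, ← zpow_neg, neg_neg, zpow_natCast]

lemma pow_kq_eq {w : G} (hw : w ^ d.p = 1) : w ^ (d.k * d.q) = w := by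
  obtain ⟨m, hm⟩ := kq_modeq d
  rw [hm, pow_add, pow_one, pow_mul, hw, one_pow, mul_one]

lemma conj_a_y' (i : Fin d.r) : d.a * d.y i * d.a⁻¹ = d.y i ^ d.q := by
  have h1 : d.a⁻¹ * (d.y i ^ d.q) * d.a = d.y i := by
    have e : d.a⁻¹ * (d.y i ^ d.q) * d.a = (d.a⁻¹ * d.y i * d.a) ^ d.q := by
      have e0 := conj_pow (i := d.q) (a := d.a⁻¹) (b := d.y i)
      rw [inv_inv] at e0
      exact e0.symm
    rw [e, conj_a_y, ← pow_mul, pow_kq_eq d (d.hyp i)]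
  calc d.a * d.y i * d.a⁻¹
      = d.a * (d.a⁻¹ * (d.y i ^ d.q) * d.a) * d.a⁻¹ := by rw [h1]
    _ = d.y i ^ d.q := by group

lemma conj_a_z' (i : Fin d.r) : d.a * d.z i * d.a⁻¹ = d.z i ^ d.k := by
  have h1 : d.a⁻¹ * (d.z i ^ d.k) * d.a = d.z i := by
    have e : d.a⁻¹ * (d.z i ^ d.k) * d.a = (d.a⁻¹ * d.z i * d.a) ^ d.k := by
      have e0 := conj_pow (i := d.k) (a := d.a⁻¹) (b := d.z i)
      rw [inv_inv] at e0
      exact e0.symm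
    rw [e, conj_a_z, ← pow_mul, mul_comm d.q d.k, pow_kq_eq d (d.hzp i)]
  calc d.a * d.z i * d.a⁻¹
      = d.a * (d.a⁻¹ * (d.z i ^ d.k) * d.a) * d.a⁻¹ := by rw [h1]
    _ = d.z i ^ d.k := by group

lemma b_inv : d.b⁻¹ = d.b := by
  have h := d.hb2
  rw [pow_two] at h
  exact inv_eq_of_mul_eq_one_right h

lemma conj_b_x : d.b⁻¹ * d.x * d.b = d.x⁻¹ := by
  have h1 : d.b⁻¹ * d.x⁻¹ * d.b = d.x := by
    calc d.b⁻¹ * d.x⁻¹ * d.b = (d.b⁻¹ * d.x⁻¹ * d.b * d.x) * d.x⁻¹ := by group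
      _ = d.x ^ 2 * d.x⁻¹ := by rw [d.hbx]
      _ = d.x := by rw [pow_two]; group
  calc d.b⁻¹ * d.x * d.b = (d.b⁻¹ * d.x⁻¹ * d.b)⁻¹ := by group
    _ = d.x⁻¹ := by rw [h1]

lemma conj_b_y (i : Fin d.r) : d.b⁻¹ * d.y i * d.b = (d.z i)⁻¹ := by
  have h1 : d.b⁻¹ * (d.y i)⁻¹ * d.b = d.z i := by
    calc d.b⁻¹ * (d.y i)⁻¹ * d.b
        = (d.b⁻¹ * (d.y i)⁻¹ * d.b * d.y i) * (d.y i)⁻¹ := by group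
      _ = (d.z i * d.y i) * (d.y i)⁻¹ := by rw [d.hby i]
      _ = d.z i := by group
  calc d.b⁻¹ * d.y i * d.b = (d.b⁻¹ * (d.y i)⁻¹ * d.b)⁻¹ := by group
    _ = (d.z i)⁻¹ := by rw [h1]

lemma conj_b_z (i : Fin d.r) : d.b⁻¹ * d.z i * d.b = (d.y i)⁻¹ := by
  have h1 : d.b⁻¹ * (d.z i)⁻¹ * d.b = d.y i := by
    calc d.b⁻¹ * (d.z i)⁻¹ * d.b
        = (d.b⁻¹ * (d.z i)⁻¹ * d.b * d.z i) * (d.z i)⁻¹ := by group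
      _ = (d.y i * d.z i) * (d.z i)⁻¹ := by rw [d.hbz i]
      _ = d.y i := by group
  calc d.b⁻¹ * d.z i * d.b = (d.b⁻¹ * (d.z i)⁻¹ * d.b)⁻¹ := by group
    _ = (d.y i)⁻¹ := by rw [h1]

lemma conj_b_a : d.b⁻¹ * d.a * d.b = d.a⁻¹ := by
  have h1 : d.b⁻¹ * d.a⁻¹ * d.b = d.a := by
    calc d.b⁻¹ * d.a⁻¹ * d.b = (d.b⁻¹ * d.a⁻¹ * d.b * d.a) * d.a⁻¹ := by group
      _ = d.a ^ 2 * d.a⁻¹ := by rw [d.hba]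
      _ = d.a := by rw [pow_two]; group
  calc d.b⁻¹ * d.a * d.b = (d.b⁻¹ * d.a⁻¹ * d.b)⁻¹ := by group
    _ = d.a⁻¹ := by rw [h1]

lemma x_mem_P : d.x ∈ d.P := Subgroup.subset_closure (Or.inl (Or.inl rfl))
lemma y_mem_P (i : Fin d.r) : d.y i ∈ d.P :=
  Subgroup.subset_closure (Or.inl (Or.inr ⟨i, rfl⟩))
lemma z_mem_P (i : Fin d.r) : d.z i ∈ d.P :=
  Subgroup.subset_closure (Or.inr ⟨i, rfl⟩)

lemma a_mem_normP : d.a ∈ Subgroup.normalizer (d.P : Set G) := by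
  apply mem_normalizer_closure
  · rintro s (((rfl : s = d.x) | ⟨i, rfl⟩) | ⟨i, rfl⟩)
    · have e : d.a * d.x * d.a⁻¹ = d.x := by rw [comm_ax]; group
      rw [e]; exact x_mem_P d
    · rw [conj_a_y']; exact pow_mem (y_mem_P d i) _
    · rw [conj_a_z']; exact pow_mem (z_mem_P d i) _
  · rintro s (((rfl : s = d.x) | ⟨i, rfl⟩) | ⟨i, rfl⟩)
    · have e : d.a⁻¹ * d.x * d.a = d.x := by
        calc d.a⁻¹ * d.x * d.a = d.a⁻¹ * (d.x * d.a) := by group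
          _ = d.a⁻¹ * (d.a * d.x) := by rw [← comm_ax]
          _ = d.x := by group
      rw [e]; exact x_mem_P d
    · rw [conj_a_y]; exact pow_mem (y_mem_P d i) _
    · rw [conj_a_z]; exact pow_mem (z_mem_P d i) _

lemma b_flip (s : G) : d.b * s * d.b⁻¹ = d.b⁻¹ * s * d.b := by rw [b_inv]

lemma b_mem_normP : d.b ∈ Subgroup.normalizer (d.P : Set G) := by
  apply mem_normalizer_closure
  · rintro s (((rfl : s = d.x) | ⟨i, rfl⟩) | ⟨i, rfl⟩)
    · rw [b_flip, conj_b_x]; exact inv_mem (x_mem_P d)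
    · rw [b_flip, conj_b_y]; exact inv_mem (z_mem_P d i)
    · rw [b_flip, conj_b_z]; exact inv_mem (y_mem_P d i)
  · rintro s (((rfl : s = d.x) | ⟨i, rfl⟩) | ⟨i, rfl⟩)
    · rw [conj_b_x]; exact inv_mem (x_mem_P d)
    · rw [conj_b_y]; exact inv_mem (z_mem_P d i)
    · rw [conj_b_z]; exact inv_mem (y_mem_P d i)

/-- the abelian subgroup `E = ⟨x, y⟩` -/
def E : Subgroup G := Subgroup.closure (({d.x} : Set G) ∪ Set.range d.y)

/-- the abelian subgroup `D = ⟨z⟩` -/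
def D : Subgroup G := Subgroup.closure (Set.range d.z)

lemma E_comm : ∀ s ∈ (({d.x} : Set G) ∪ Set.range d.y), ∀ u ∈ (({d.x} : Set G) ∪ Set.range d.y),
    s * u = u * s := by
  rintro s ((rfl : s = d.x) | ⟨i, rfl⟩) u ((rfl : u = d.x) | ⟨j, rfl⟩)
  · rfl
  · exact mul_comm_of_comm_eq_one (d.hxy j)
  · exact (mul_comm_of_comm_eq_one (d.hxy i)).symm
  · exact mul_comm_of_comm_eq_one (d.hyy i j)

lemma E_pow : ∀ s ∈ (({d.x} : Set G) ∪ Set.range d.y), s ^ d.p = 1 := by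
  rintro s ((rfl : s = d.x) | ⟨i, rfl⟩)
  · exact d.hxp
  · exact d.hyp i

lemma hE : IsPGroup d.p (E d) := by
  intro g
  refine ⟨1, ?_⟩
  rw [pow_one]
  have h := pow_eq_one_closure (E_comm d) (E_pow d) (g : G) g.2
  exact Subtype.ext (by simpa using h)

lemma hD : IsPGroup d.p (D d) := by
  intro g
  refine ⟨1, ?_⟩
  rw [pow_one]
  have hcomm : ∀ s ∈ Set.range d.z, ∀ u ∈ Set.range d.z, s * u = u * s := by
    rintro s ⟨i, rfl⟩ u ⟨j, rfl⟩
    exact mul_comm_of_comm_eq_one (d.hzz i j)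
  have hpow : ∀ s ∈ Set.range d.z, s ^ d.p = 1 := by
    rintro s ⟨i, rfl⟩; exact d.hzp i
  have h := pow_eq_one_closure hcomm hpow (g : G) g.2
  exact Subtype.ext (by simpa using h)

lemma x_mem_E : d.x ∈ E d := Subgroup.subset_closure (Or.inl rfl)
lemma y_mem_E (i : Fin d.r) : d.y i ∈ E d := Subgroup.subset_closure (Or.inr ⟨i, rfl⟩)

lemma comm_xz (i : Fin d.r) : d.x * d.z i = d.z i * d.x :=
  mul_comm_of_comm_eq_one (d.hxz i)

lemma z_conj_y (i : Fin d.r) : (d.z i)⁻¹ * d.y i * d.z i = d.y i * d.x := by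
  calc (d.z i)⁻¹ * d.y i * d.z i
      = d.y i * ((d.y i)⁻¹ * (d.z i)⁻¹ * d.y i * d.z i) := by group
    _ = d.y i * d.x := by rw [d.hyz i]

lemma z_conj_y' (i : Fin d.r) : d.z i * d.y i * (d.z i)⁻¹ = d.y i * d.x⁻¹ := by
  have h2 : d.y i = d.z i * (d.y i * d.x) * (d.z i)⁻¹ := by
    rw [← z_conj_y]; group
  have hzx : d.z i * d.x⁻¹ * (d.z i)⁻¹ = d.x⁻¹ := by
    have hc : d.x⁻¹ * d.z i = d.z i * d.x⁻¹ := by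
      have := comm_xz d i
      calc d.x⁻¹ * d.z i = d.x⁻¹ * (d.z i * d.x) * d.x⁻¹ := by group
        _ = d.x⁻¹ * (d.x * d.z i) * d.x⁻¹ := by rw [← this]
        _ = d.z i * d.x⁻¹ := by group
    rw [← hc]; group
  calc d.z i * d.y i * (d.z i)⁻¹
      = (d.z i * (d.y i * d.x) * (d.z i)⁻¹) * (d.z i * d.x⁻¹ * (d.z i)⁻¹) := by group
    _ = d.y i * (d.z i * d.x⁻¹ * (d.z i)⁻¹) := by rw [← h2]
    _ = d.y i * d.x⁻¹ := by rw [hzx]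

lemma hDE : D d ≤ Subgroup.normalizer ((E d : Subgroup G) : Set G) := by
  rw [D, Subgroup.closure_le]
  rintro s ⟨j, rfl⟩
  rw [SetLike.mem_coe]
  apply mem_normalizer_closure
  · rintro u ((rfl : u = d.x) | ⟨i, rfl⟩)
    · have e : d.z j * d.x * (d.z j)⁻¹ = d.x := by
        rw [← comm_xz]; group
      rw [e]; exact x_mem_E d
    · by_cases hij : i = j
      · subst hij
        rw [z_conj_y']
        exact mul_mem (y_mem_E d i) (inv_mem (x_mem_E d))
      · have hc := mul_comm_of_comm_eq_one (d.hyz' i j (by exact hij))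
        have e : d.z j * d.y i * (d.z j)⁻¹ = d.y i := by
          rw [← hc]; group
        rw [e]; exact y_mem_E d i
  · rintro u ((rfl : u = d.x) | ⟨i, rfl⟩)
    · have e : (d.z j)⁻¹ * d.x * d.z j = d.x := by
        calc (d.z j)⁻¹ * d.x * d.z j = (d.z j)⁻¹ * (d.x * d.z j) := by group
          _ = (d.z j)⁻¹ * (d.z j * d.x) := by rw [comm_xz]
          _ = d.x := by group
      rw [e]; exact x_mem_E d
    · by_cases hij : i = j
      · subst hij
        rw [z_conj_y]
        exact mul_mem (y_mem_E d i) (x_mem_E d)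
      · have hc := mul_comm_of_comm_eq_one (d.hyz' i j (by exact hij))
        have e : (d.z j)⁻¹ * d.y i * d.z j = d.y i := by
          calc (d.z j)⁻¹ * d.y i * d.z j = (d.z j)⁻¹ * (d.y i * d.z j) := by group
            _ = (d.z j)⁻¹ * (d.z j * d.y i) := by rw [hc]
            _ = d.y i := by group
        rw [e]; exact y_mem_E d i

lemma P_eq_sup : d.P = E d ⊔ D d := by
  rw [GData.P, E, D, ← Subgroup.closure_union]

lemma hP : IsPGroup d.p d.P := by
  rw [P_eq_sup]
  exact IsPGroup.to_sup_of_normal_left' (hE d) (hD d) (hDE d)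

lemma p_ne_two : d.p ≠ 2 := by
  intro h
  have := d.hp4
  rw [h] at this
  omega

lemma cardP_le : Nat.card d.P ≤ d.p ^ (2 * d.r + 1) := by
  haveI : Fact d.p.Prime := ⟨d.hp⟩
  obtain ⟨s, hs⟩ := IsPGroup.iff_card.mp (hP d)
  have hdvd : Nat.card d.P ∣ Nat.card G := Subgroup.card_subgroup_dvd_card d.P
  have hcardG : Nat.card G = d.p ^ (2 * d.r + 1) * 2 ^ d.n := by
    rw [Nat.card_eq_fintype_card, d.hcard]
  have hcop : Nat.Coprime (d.p ^ s) (2 ^ d.n) :=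
    Nat.Coprime.pow _ _ ((Nat.coprime_primes d.hp Nat.prime_two).mpr (p_ne_two d))
  have hdvd' : d.p ^ s ∣ d.p ^ (2 * d.r + 1) := by
    apply hcop.dvd_of_dvd_mul_right
    rw [← hcardG, ← hs]
    exact hdvd
  have hsle : s ≤ 2 * d.r + 1 := (Nat.pow_dvd_pow_iff_le_right d.hp.one_lt).mp hdvd'
  rw [hs]
  exact Nat.pow_le_pow_right d.hp.pos hsle

lemma a_mem_M : d.a ∈ M d := Subgroup.mem_sup_right (Subgroup.subset_closure rfl)

lemma P_le_M : d.P ≤ M d := le_sup_left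

lemma M_eq_closure : M d = Subgroup.closure ((d.P : Set G) ∪ {d.a}) := by
  rw [M, Subgroup.closure_union, Subgroup.closure_eq]

lemma b_mem_normM : d.b ∈ Subgroup.normalizer ((M d : Subgroup G) : Set G) := by
  rw [M_eq_closure]
  have hP' := Subgroup.mem_normalizer_iff.mp (b_mem_normP d)
  apply mem_normalizer_closure
  · rintro s (hs | (rfl : s = d.a))
    · exact Subgroup.subset_closure (Or.inl (by
        rw [SetLike.mem_coe] at hs ⊢
        exact (hP' s).mp hs))
    · have e : d.b * d.a * d.b⁻¹ = d.a⁻¹ := by rw [b_flip, conj_b_a]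
      rw [e]
      exact inv_mem (Subgroup.subset_closure (Or.inr rfl))
  · rintro s (hs | (rfl : s = d.a))
    · refine Subgroup.subset_closure (Or.inl ?_)
      rw [SetLike.mem_coe] at hs ⊢
      have := (hP' (d.b⁻¹ * s * d.b)).mpr
      apply this
      have e : d.b * (d.b⁻¹ * s * d.b) * d.b⁻¹ = s := by group
      rwa [e]
    · rw [conj_b_a]
      exact inv_mem (Subgroup.subset_closure (Or.inr rfl))

lemma M_normalizer_top : Subgroup.normalizer ((M d : Subgroup G) : Set G) = ⊤ := by
  rw [eq_top_iff, ← d.hgen, Subgroup.closure_le]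
  rintro s ((((rfl : s = d.x) | (rfl : s = d.a) | (rfl : s = d.b)) | ⟨i, rfl⟩) | ⟨i, rfl⟩)
  · exact Subgroup.le_normalizer (P_le_M d (x_mem_P d))
  · exact Subgroup.le_normalizer (a_mem_M d)
  · exact b_mem_normM d
  · exact Subgroup.le_normalizer (P_le_M d (y_mem_P d i))
  · exact Subgroup.le_normalizer (P_le_M d (z_mem_P d i))

lemma M_normal : ∀ g : G, ∀ m ∈ M d, g⁻¹ * m * g ∈ M d := by
  intro g m hm
  have hg : g⁻¹ ∈ Subgroup.normalizer ((M d : Subgroup G) : Set G) := by rw [M_normalizer_top]; trivial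
  have h := (Subgroup.mem_normalizer_iff.mp hg m).mp hm
  rwa [inv_inv] at h

lemma card_lt_aux (e1 e2 : ℕ) (h : e1 < e2) :
    d.p ^ (2 * d.r + 1) * 2 ^ e1 < d.p ^ (2 * d.r + 1) * 2 ^ e2 := by
  have hpos : 0 < d.p ^ (2 * d.r + 1) := Nat.pow_pos d.hp.pos
  exact (Nat.mul_lt_mul_left hpos).mpr (Nat.pow_lt_pow_right one_lt_two h)

lemma b_not_mem_M : d.b ∉ M d := by
  intro hb
  have htop : M d = ⊤ := by
    rw [eq_top_iff, ← d.hgen, Subgroup.closure_le]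
    rintro s ((((rfl : s = d.x) | (rfl : s = d.a) | (rfl : s = d.b)) | ⟨i, rfl⟩) | ⟨i, rfl⟩)
    · exact P_le_M d (x_mem_P d)
    · exact a_mem_M d
    · exact hb
    · exact P_le_M d (y_mem_P d i)
    · exact P_le_M d (z_mem_P d i)
  have h1 : Nat.card G = d.p ^ (2 * d.r + 1) * 2 ^ d.n := by
    rw [Nat.card_eq_fintype_card, d.hcard]
  have h2 : Nat.card (M d) = Nat.card G := by rw [htop, Subgroup.card_top]
  have h3 : Nat.card (M d) ≤ Nat.card d.P * 2 ^ (d.n - 1) :=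
    card_sup_le (a_mem_normP d) (Nat.pow_pos two_pos) d.han
  have h4 : Nat.card d.P * 2 ^ (d.n - 1) ≤ d.p ^ (2 * d.r + 1) * 2 ^ (d.n - 1) :=
    Nat.mul_le_mul_right _ (cardP_le d)
  have h5 := card_lt_aux d (d.n - 1) d.n (by have := d.hn; omega)
  have : Nat.card G < Nat.card G := by
    calc Nat.card G = Nat.card (M d) := h2.symm
      _ ≤ Nat.card d.P * 2 ^ (d.n - 1) := h3
      _ ≤ d.p ^ (2 * d.r + 1) * 2 ^ (d.n - 1) := h4
      _ < d.p ^ (2 * d.r + 1) * 2 ^ d.n := h5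
      _ = Nat.card G := h1.symm
  exact lt_irrefl _ this

lemma a_not_mem_P : d.a ∉ d.P := by
  intro ha
  haveI : Fact d.p.Prime := ⟨d.hp⟩
  obtain ⟨t, ht⟩ := IsPGroup.iff_orderOf.mp (hP d) ⟨d.a, ha⟩
  rw [Subgroup.orderOf_mk] at ht
  have hdvd2 : orderOf d.a ∣ 2 ^ (d.n - 1) := orderOf_dvd_of_pow_eq_one d.han
  have hcop : Nat.Coprime (d.p ^ t) (2 ^ (d.n - 1)) :=
    Nat.Coprime.pow _ _ ((Nat.coprime_primes d.hp Nat.prime_two).mpr (p_ne_two d))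
  have h1 : d.p ^ t = 1 := hcop.eq_one_of_dvd (ht ▸ hdvd2)
  have ha1 : d.a = 1 := orderOf_eq_one_iff.mp (by rw [ht, h1])
  -- counting contradiction
  have htop : d.P ⊔ Subgroup.closure {d.b} = ⊤ := by
    rw [eq_top_iff, ← d.hgen, Subgroup.closure_le]
    rintro s ((((rfl : s = d.x) | (rfl : s = d.a) | (rfl : s = d.b)) | ⟨i, rfl⟩) | ⟨i, rfl⟩)
    · exact Subgroup.mem_sup_left (x_mem_P d)
    · rw [ha1]; exact one_mem _
    · exact Subgroup.mem_sup_right (Subgroup.subset_closure rfl)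
    · exact Subgroup.mem_sup_left (y_mem_P d i)
    · exact Subgroup.mem_sup_left (z_mem_P d i)
  have h1' : Nat.card G = d.p ^ (2 * d.r + 1) * 2 ^ d.n := by
    rw [Nat.card_eq_fintype_card, d.hcard]
  have h2 : Nat.card (d.P ⊔ Subgroup.closure {d.b} : Subgroup G) = Nat.card G := by
    rw [htop, Subgroup.card_top]
  have h3 : Nat.card (d.P ⊔ Subgroup.closure {d.b} : Subgroup G) ≤ Nat.card d.P * 2 :=
    card_sup_le (b_mem_normP d) two_pos d.hb2
  have h4 : Nat.card d.P * 2 ≤ d.p ^ (2 * d.r + 1) * 2 := Nat.mul_le_mul_right _ (cardP_le d)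
  have h5 : d.p ^ (2 * d.r + 1) * 2 < d.p ^ (2 * d.r + 1) * 2 ^ d.n := by
    have := card_lt_aux d 1 d.n (by have := d.hn; omega)
    simpa using this
  have : Nat.card G < Nat.card G := by
    calc Nat.card G = _ := h2.symm
      _ ≤ Nat.card d.P * 2 := h3
      _ ≤ d.p ^ (2 * d.r + 1) * 2 := h4
      _ < d.p ^ (2 * d.r + 1) * 2 ^ d.n := h5
      _ = Nat.card G := h1'.symm
  exact lt_irrefl _ this

lemma key (c : G) (hcn : c ∈ Subgroup.normalizer (d.P : Set G)) (hc2 : c ^ 2 = 1) (hcM : c ∉ M d) :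
    ¬ Paper.IsShodaPair (d.P ⊔ Subgroup.closure {c}) d.P := by
  rintro ⟨-, -, -, h4⟩
  have hcomm_le : Paper.commSub (d.P ⊔ Subgroup.closure {c}) d.a ≤ M d := by
    rw [Paper.commSub, Subgroup.closure_le]
    rintro w ⟨h, hh, rfl⟩
    rw [SetLike.mem_coe]
    have e : d.a⁻¹ * h⁻¹ * d.a * h = d.a⁻¹ * (h⁻¹ * d.a * h) := by group
    rw [e]
    exact mul_mem (inv_mem (a_mem_M d)) (M_normal d h d.a (a_mem_M d))
  have hinf : Paper.commSub (d.P ⊔ Subgroup.closure {c}) d.a ⊓ (d.P ⊔ Subgroup.closure {c}) ≤ d.P := by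
    intro w hw
    rw [Subgroup.mem_inf] at hw
    obtain ⟨hw1, hw2⟩ := hw
    have hwM : w ∈ M d := hcomm_le hw1
    rcases mem_sup_two hcn hc2 hw2 with hwP | ⟨u, hu, rfl⟩
    · exact hwP
    · exfalso
      apply hcM
      have e : c = u⁻¹ * (u * c) := by group
      rw [e]
      exact mul_mem (inv_mem (P_le_M d hu)) hwM
  have haH := h4 d.a hinf
  rcases mem_sup_two hcn hc2 haH with haP | ⟨u, hu, hau⟩
  · exact a_not_mem_P d haP
  · apply hcM
    have e : c = u⁻¹ * d.a := by rw [hau]; group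
    rw [e]
    exact mul_mem (inv_mem (P_le_M d hu)) (a_mem_M d)

lemma ba_sq : (d.b * d.a) ^ 2 = 1 := by
  have h := conj_b_a d
  rw [b_inv] at h
  rw [pow_two]
  calc d.b * d.a * (d.b * d.a) = (d.b * d.a * d.b) * d.a := by group
    _ = d.a⁻¹ * d.a := by rw [h]
    _ = 1 := by group

lemma ba_not_mem_M : d.b * d.a ∉ M d := by
  intro hba
  apply b_not_mem_M d
  have e : d.b = (d.b * d.a) * d.a⁻¹ := by group
  rw [e]
  exact mul_mem hba (inv_mem (a_mem_M d))

end PaperAux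

/-- Neither `(⟨P,b⟩, P)` nor `(⟨P,ba⟩, P)` is a Shoda pair of `G`. -/
theorem stmt10 {G : Type*} [Group G] [Fintype G] (d : Paper.GData G) :
    ¬ Paper.IsShodaPair (d.P ⊔ Subgroup.closure {d.b}) d.P ∧
    ¬ Paper.IsShodaPair (d.P ⊔ Subgroup.closure {d.b * d.a}) d.P := by
  constructor
  · exact PaperAux.key d d.b (PaperAux.b_mem_normP d) d.hb2 (PaperAux.b_not_mem_M d)
  · exact PaperAux.key d (d.b * d.a)
      (mul_mem (PaperAux.b_mem_normP d) (PaperAux.a_mem_normP d))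
      (PaperAux.ba_sq d) (PaperAux.ba_not_mem_M d)
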